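/- If (V0, V1) is a split of a simple graph G and c is any vertex of G, then (V0, V1) is also a split of the local complement G*c. -/

import Mathlib

/-- The local complement `G*c` of a simple graph `G` at a vertex `c`: distinct
vertices `u`, `v` are adjacent in `G*c` iff (`u ~ v` in `G`) XOR (`u` and `v` are
both neighbours of `c` in `G`). -/
def localComplement {V : Type*} (G : SimpleGraph V) (c : V) : SimpleGraph V where
  Adj u v := u ≠ v ∧ Xor' (G.Adj u v) (G.Adj c u ∧ G.Adj c v)
  symm := ⟨by
    rintro u v ⟨h, hx⟩
    refine ⟨h.symm, ?_⟩
    rwa [G.adj_comm v u, and_comm]⟩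
  loopless := ⟨fun u h => h.1 rfl⟩

/-- A split of a simple graph `G` on vertex set `V`: a partition `V = V0 ⊔ V1` with
`|V0| ≥ 2` and `|V1| ≥ 2`, such that the edges between `V0` and `V1` are exactly
those of a complete bipartite graph `K(U0, U1)` with `U0 ⊆ V0`, `U1 ⊆ V1`. -/
def IsSplit {V : Type*} (G : SimpleGraph V) (V0 V1 : Set V) : Prop :=
  V0 ∪ V1 = Set.univ ∧ Disjoint V0 V1 ∧ 2 ≤ V0.ncard ∧ 2 ≤ V1.ncard ∧
    ∃ U0 ⊆ V0, ∃ U1 ⊆ V1, ∀ u ∈ V0, ∀ w ∈ V1, (G.Adj u w ↔ u ∈ U0 ∧ w ∈ U1)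

/-- A split of `G` is also a split of the local complement `G*c`, for any vertex `c`. -/
theorem stmt7 {V : Type*} (G : SimpleGraph V) (c : V) (V0 V1 : Set V)
    (h : IsSplit G V0 V1) : IsSplit (localComplement G c) V0 V1 := by
  obtain ⟨huniv, hdisj, h0, h1, U0, hU0, U1, hU1, hadj⟩ := h
  refine ⟨huniv, hdisj, h0, h1, ?_⟩
  have hne : ∀ u ∈ V0, ∀ w ∈ V1, u ≠ w := fun u hu w hw he =>
    Set.disjoint_left.mp hdisj hu (he ▸ hw)
  by_cases hc0 : c ∈ V0
  · by_cases hcU : c ∈ U0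
    · refine ⟨{u ∈ V0 | Xor' (u ∈ U0) (G.Adj c u)}, Set.sep_subset _ _, U1, hU1, ?_⟩
      intro u hu w hw
      have hne' := hne u hu w hw
      have h1' : G.Adj u w ↔ u ∈ U0 ∧ w ∈ U1 := hadj u hu w hw
      have hcw : G.Adj c w ↔ w ∈ U1 := by rw [hadj c hc0 w hw]; simp [hcU]
      show (u ≠ w ∧ Xor' (G.Adj u w) (G.Adj c u ∧ G.Adj c w)) ↔ _
      simp only [Set.mem_setOf_eq, Xor', xor_def, h1', hcw]
      constructor
      · rintro ⟨-, h⟩; tauto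
      · rintro ⟨⟨hu', hx⟩, hw'⟩; exact ⟨hne', by tauto⟩
    · refine ⟨U0, hU0, U1, hU1, ?_⟩
      intro u hu w hw
      have hne' := hne u hu w hw
      have h1' : G.Adj u w ↔ u ∈ U0 ∧ w ∈ U1 := hadj u hu w hw
      have hcw : ¬ G.Adj c w := by rw [hadj c hc0 w hw]; tauto
      show (u ≠ w ∧ Xor' (G.Adj u w) (G.Adj c u ∧ G.Adj c w)) ↔ _
      simp only [Xor', xor_def, h1']
      constructor
      · rintro ⟨-, h⟩; tauto
      · intro h; exact ⟨hne', by tauto⟩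
  · have hc1 : c ∈ V1 := by
      have := Set.mem_univ c
      rw [← huniv, Set.mem_union] at this
      tauto
    by_cases hcU : c ∈ U1
    · refine ⟨U0, hU0, {w ∈ V1 | Xor' (w ∈ U1) (G.Adj c w)}, Set.sep_subset _ _, ?_⟩
      intro u hu w hw
      have hne' := hne u hu w hw
      have h1' : G.Adj u w ↔ u ∈ U0 ∧ w ∈ U1 := hadj u hu w hw
      have hcu : G.Adj c u ↔ u ∈ U0 := by
        rw [G.adj_comm, hadj u hu c hc1]; simp [hcU]
      show (u ≠ w ∧ Xor' (G.Adj u w) (G.Adj c u ∧ G.Adj c w)) ↔ _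
      simp only [Set.mem_setOf_eq, Xor', xor_def, h1', hcu]
      constructor
      · rintro ⟨-, h⟩; tauto
      · rintro ⟨hu', hw', hx⟩; exact ⟨hne', by tauto⟩
    · refine ⟨U0, hU0, U1, hU1, ?_⟩
      intro u hu w hw
      have hne' := hne u hu w hw
      have h1' : G.Adj u w ↔ u ∈ U0 ∧ w ∈ U1 := hadj u hu w hw
      have hcu : ¬ G.Adj c u := by rw [G.adj_comm, hadj u hu c hc1]; tauto
      show (u ≠ w ∧ Xor' (G.Adj u w) (G.Adj c u ∧ G.Adj c w)) ↔ _
      simp only [Xor', xor_def, h1']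
      constructor
      · rintro ⟨-, h⟩; tauto
      · intro h; exact ⟨hne', by tauto⟩
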